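/- arXiv:1810.01436 — 7 statements merged into one kernel-verified Lean document; each statement's English description precedes it below -/
import Mathlib

section
/- If for each player i in a finite set I, the function u_i : R^T → R is concave, and c : R^T → R^T with c(X) = (c_t(X_t))_t where each c_t : R → R is non-decreasing, then the map H' sending a profile (x_i)_{i∈I} ∈ ∏_i X_i (each X_i ⊂ R^T convex compact) to the set ∏_i { c(Σ_j x_j) + g_i : g_i ∈ ∂(-u_i)(x_i) } is a monotone set-valued map, i.e., for all profiles x, y and all selections g ∈ H'(x), h ∈ H'(y), one has Σ_i ⟨g_i − h_i, x_i − y_i⟩ ≥ 0. -/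
open scoped RealInnerProductSpace BigOperators

noncomputable section

/-- Componentwise cost vector. -/
def cvec {T : ℕ} (c : Fin T → ℝ → ℝ) (X : EuclideanSpace ℝ (Fin T)) :
    EuclideanSpace ℝ (Fin T) :=
  WithLp.toLp 2 (fun t => c t (X t))

/-- Convex subdifferential of `f : E → ℝ` at `x`. -/
def subdiff {T : ℕ} (f : EuclideanSpace ℝ (Fin T) → ℝ) (x : EuclideanSpace ℝ (Fin T)) :
    Set (EuclideanSpace ℝ (Fin T)) :=
  {g | ∀ y, f x + ⟪g, y - x⟫ ≤ f y}

theorem monotonicity_of_H' {I T : ℕ}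
    (X : Fin I → Set (EuclideanSpace ℝ (Fin T)))
    (hXconv : ∀ i, Convex ℝ (X i)) (hXcpt : ∀ i, IsCompact (X i))
    (u : Fin I → EuclideanSpace ℝ (Fin T) → ℝ)
    (hu : ∀ i, ConcaveOn ℝ Set.univ (u i))
    (hucont : ∀ i, Continuous (u i))
    (c : Fin T → ℝ → ℝ) (hc : ∀ t, Monotone (c t))
    (x y : Fin I → EuclideanSpace ℝ (Fin T))
    (hx : ∀ i, x i ∈ X i) (hy : ∀ i, y i ∈ X i)
    (g h : Fin I → EuclideanSpace ℝ (Fin T))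
    (hg : ∀ i, ∃ gi ∈ subdiff (fun z => - u i z) (x i),
      g i = cvec c (∑ j, x j) + gi)
    (hh : ∀ i, ∃ hi ∈ subdiff (fun z => - u i z) (y i),
      h i = cvec c (∑ j, y j) + hi) :
    0 ≤ ∑ i, ⟪g i - h i, x i - y i⟫ := by
  choose g' hg' hgeq using hg
  choose h' hh' hheq using hh
  set SX := ∑ j, x j with hSX
  set SY := ∑ j, y j with hSY
  have key : ∀ i, 0 ≤ ⟪g' i - h' i, x i - y i⟫ := by
    intro i
    have h1 := hg' i (y i)
    have h2 := hh' i (x i)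
    simp only [subdiff] at h1 h2
    have e1 : ⟪g' i - h' i, x i - y i⟫
        = -(⟪g' i, y i - x i⟫ + ⟪h' i, x i - y i⟫) := by
      have : ⟪g' i, y i - x i⟫ = -⟪g' i, x i - y i⟫ := by
        rw [← inner_neg_right]; congr 1; abel
      rw [inner_sub_left, this]; ring
    rw [e1]; linarith
  have split : ∀ i, ⟪g i - h i, x i - y i⟫
      = ⟪cvec c SX - cvec c SY, x i - y i⟫ + ⟪g' i - h' i, x i - y i⟫ := by
    intro i
    rw [hgeq i, hheq i]
    have : cvec c SX + g' i - (cvec c SY + h' i)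
        = (cvec c SX - cvec c SY) + (g' i - h' i) := by abel
    rw [this, inner_add_left]
  have cpart : 0 ≤ ⟪cvec c SX - cvec c SY, SX - SY⟫ := by
    rw [inner_sub_left, inner_sub_right, inner_sub_right]
    simp only [PiLp.inner_apply, RCLike.inner_apply, conj_trivial]
    have : ∀ t, 0 ≤ (c t (SX t) - c t (SY t)) * (SX t - SY t) := by
      intro t
      rcases le_total (SY t) (SX t) with ht | ht
      · exact mul_nonneg (sub_nonneg.2 (hc t ht)) (sub_nonneg.2 ht)
      · nlinarith [hc t ht]
    have := Finset.sum_nonneg (s := Finset.univ) fun t _ => this t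
    simp only [cvec, ← Finset.sum_sub_distrib]
    refine le_trans this (le_of_eq (Finset.sum_congr rfl fun t _ => by ring))
  calc (0:ℝ) ≤ ⟪cvec c SX - cvec c SY, SX - SY⟫ + ∑ i, ⟪g' i - h' i, x i - y i⟫ := by
        exact add_nonneg cpart (Finset.sum_nonneg fun i _ => key i)
    _ = ∑ i, ⟪g i - h i, x i - y i⟫ := by
        rw [hSX, hSY, ← Finset.sum_sub_distrib, inner_sum, ← Finset.sum_add_distrib]
        exact Finset.sum_congr rfl fun i _ => (split i).symm
end
end

section
/- If for each i ∈ I the function u_i is α_i-strongly concave, then the map H' defined by H'(x) = ∏_i { c(Σ_j x_j) + g_i : g_i ∈ ∂(−u_i)(x_i) } is α-strongly monotone with α = min_i α_i; that is, for all profiles x, y ∈ ∏_i X_i and all g ∈ H'(x), h ∈ H'(y), Σ_i ⟨g_i − h_i, x_i − y_i⟩ ≥ α · Σ_i ‖x_i − y_i‖². -/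
open scoped RealInnerProductSpace BigOperators

noncomputable section

lemma cvec_mono_inner {T : ℕ} (c : Fin T → ℝ → ℝ) (hc : ∀ t, Monotone (c t))
    (a b : EuclideanSpace ℝ (Fin T)) :
    (0:ℝ) ≤ ⟪cvec c a - cvec c b, a - b⟫ := by
  rw [PiLp.inner_apply]
  apply Finset.sum_nonneg
  intro t _
  have : ((cvec c a - cvec c b) t) * ((a - b) t)
      = (c t (a t) - c t (b t)) * (a t - b t) := by
    simp [cvec]
  rw [RCLike.inner_apply, conj_trivial, mul_comm, this]
  rcases le_total (a t) (b t) with hab | hab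
  · have := hc t hab
    nlinarith
  · have := hc t hab
    nlinarith

lemma onesided {n : ℕ} (α : ℝ) (u : EuclideanSpace ℝ (Fin n) → ℝ)
    (hf : ConvexOn ℝ Set.univ (fun z => -u z - (α/2)*‖z‖^2))
    {x g : EuclideanSpace ℝ (Fin n)} (hg : g ∈ subdiff (fun z => -u z) x)
    (y : EuclideanSpace ℝ (Fin n)) {t : ℝ} (ht : t ∈ Set.Ioc (0:ℝ) 1) :
    ⟪g, y - x⟫ ≤ ((-u y - (α/2)*‖y‖^2) - (-u x - (α/2)*‖x‖^2))
      + α*⟪x, y-x⟫ + (α/2)*t*‖y-x‖^2 := by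
  obtain ⟨ht0, ht1⟩ := ht
  set z : EuclideanSpace ℝ (Fin n) := x + t • (y - x) with hz
  have h1 : -u x + ⟪g, z - x⟫ ≤ -u z := hg z
  have hzx : z - x = t • (y - x) := by rw [hz]; abel
  have h1' : -u x + t * ⟪g, y - x⟫ ≤ -u z := by
    rwa [hzx, real_inner_smul_right] at h1
  have hzc : z = (1 - t) • x + t • y := by
    rw [hz]; module
  have h2 : -u z - (α/2)*‖z‖^2 ≤ (1-t)*(-u x - (α/2)*‖x‖^2) + t*(-u y - (α/2)*‖y‖^2) := by
    have := hf.2 (Set.mem_univ x) (Set.mem_univ y) (by linarith : (0:ℝ) ≤ 1 - t)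
      (le_of_lt ht0) (by ring : (1-t) + t = 1)
    simpa [← hzc, smul_eq_mul] using this
  have hnz : ‖z‖^2 = ‖x‖^2 + 2*(t*⟪x, y-x⟫) + t^2*‖y-x‖^2 := by
    rw [hz, norm_add_sq_real, real_inner_smul_right, norm_smul, mul_pow]
    simp [sq_abs]
  rw [hnz] at h2
  have key : t * ⟪g, y - x⟫ ≤ t * (((-u y - (α/2)*‖y‖^2) - (-u x - (α/2)*‖x‖^2))
      + α*⟪x, y-x⟫ + (α/2)*t*‖y-x‖^2) := by nlinarith
  exact le_of_mul_le_mul_left (by linarith) ht0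

lemma strong_mono_pair {n : ℕ} (α : ℝ) (u : EuclideanSpace ℝ (Fin n) → ℝ)
    (hf : ConvexOn ℝ Set.univ (fun z => -u z - (α/2)*‖z‖^2))
    {x y g h : EuclideanSpace ℝ (Fin n)} (hg : g ∈ subdiff (fun z => -u z) x)
    (hh : h ∈ subdiff (fun z => -u z) y) :
    α * ‖x - y‖^2 ≤ ⟪g - h, x - y⟫ := by
  have key : ∀ t ∈ Set.Ioc (0:ℝ) 1, α * (1 - t) * ‖x - y‖^2 ≤ ⟪g - h, x - y⟫ := by
    intro t ht
    have h1 := onesided α u hf hg y ht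
    have h2 := onesided α u hf hh x ht
    have e1 : ⟪x, y - x⟫ + ⟪y, x - y⟫ = -‖x - y‖^2 := by
      rw [← real_inner_self_eq_norm_sq]
      simp [inner_sub_left, inner_sub_right, real_inner_comm x y]
      rw [norm_sub_sq_real]
      ring
    have e2 : ⟪g - h, x - y⟫ = -⟪g, y - x⟫ - ⟪h, x - y⟫ := by
      rw [inner_sub_left, ← inner_neg_right]
      simp
    have e3 : ‖y - x‖^2 = ‖x - y‖^2 := by rw [norm_sub_rev]
    rw [e3] at h1
    have e1' : α*⟪x, y - x⟫ + α*⟪y, x - y⟫ = -(α * ‖x - y‖^2) := by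
      linear_combination α * e1
    nlinarith
  have hD : (0:ℝ) ≤ ‖x - y‖^2 := by positivity
  have tend : Filter.Tendsto (fun t : ℝ => α * (1 - t) * ‖x - y‖^2)
      (nhdsWithin 0 (Set.Ioi 0)) (nhds (α * (1 - 0) * ‖x - y‖^2)) := by
    exact ((continuous_const.mul (continuous_const.sub continuous_id)).mul
      continuous_const).continuousAt.tendsto.mono_left nhdsWithin_le_nhds
  have ev : ∀ᶠ t in nhdsWithin (0:ℝ) (Set.Ioi 0),
      α * (1 - t) * ‖x - y‖^2 ≤ ⟪g - h, x - y⟫ := by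
    have h01 : ∀ᶠ t in nhdsWithin (0:ℝ) (Set.Ioi 0), t ≤ 1 := by
      have : ∀ᶠ t in nhds (0:ℝ), t < 1 := eventually_lt_nhds (by norm_num)
      exact (this.mono fun t ht => ht.le).filter_mono nhdsWithin_le_nhds
    filter_upwards [self_mem_nhdsWithin, h01] with t ht ht1
    exact key t ⟨ht, ht1⟩
  have := le_of_tendsto tend ev
  simpa using this


/-- If each utility is strongly concave, H' is strongly monotone with modulus min_i α_i. -/
theorem strong_monotonicity_of_H' {I T : ℕ}
    (X : Fin I → Set (EuclideanSpace ℝ (Fin T)))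
    (hXconv : ∀ i, Convex ℝ (X i)) (hXcpt : ∀ i, IsCompact (X i))
    (u : Fin I → EuclideanSpace ℝ (Fin T) → ℝ)
    (α : Fin I → ℝ) (hαpos : ∀ i, 0 < α i)
    (hstrong : ∀ i, ConvexOn ℝ Set.univ (fun z => - u i z - (α i / 2) * ‖z‖ ^ 2))
    (hucont : ∀ i, Continuous (u i))
    (c : Fin T → ℝ → ℝ) (hc : ∀ t, Monotone (c t)) (hcconv : ∀ t, ConvexOn ℝ Set.univ (c t))
    (hccont : ∀ t, Continuous (c t))
    (αmin : ℝ) (hαmin : IsGLB (Set.range α) αmin)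
    (x y : Fin I → EuclideanSpace ℝ (Fin T))
    (hx : ∀ i, x i ∈ X i) (hy : ∀ i, y i ∈ X i)
    (g h : Fin I → EuclideanSpace ℝ (Fin T))
    (hg : ∀ i, ∃ gi ∈ subdiff (fun z => - u i z) (x i), g i = cvec c (∑ j, x j) + gi)
    (hh : ∀ i, ∃ hi ∈ subdiff (fun z => - u i z) (y i), h i = cvec c (∑ j, y j) + hi) :
    αmin * ∑ i, ‖x i - y i‖ ^ 2 ≤ ∑ i, ⟪g i - h i, x i - y i⟫ := by
  choose gi hgi hgeq using hg
  choose hi hhi hheq using hh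
  have hsum : ∀ i : Fin I, g i - h i =
      (cvec c (∑ j, x j) - cvec c (∑ j, y j)) + (gi i - hi i) := by
    intro i; rw [hgeq i, hheq i]; abel
  have split : ∑ i, ⟪g i - h i, x i - y i⟫
      = ⟪cvec c (∑ j, x j) - cvec c (∑ j, y j), (∑ j, x j) - (∑ j, y j)⟫
        + ∑ i, ⟪gi i - hi i, x i - y i⟫ := by
    have : (∑ j, x j) - (∑ j, y j) = ∑ i, (x i - y i) := by
      rw [Finset.sum_sub_distrib]
    rw [this, inner_sum, ← Finset.sum_add_distrib]
    apply Finset.sum_congr rfl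
    intro i _
    rw [hsum i, inner_add_left]
  rw [split]
  have h1 : (0:ℝ) ≤ ⟪cvec c (∑ j, x j) - cvec c (∑ j, y j), (∑ j, x j) - (∑ j, y j)⟫ :=
    cvec_mono_inner c hc _ _
  have h2 : αmin * ∑ i, ‖x i - y i‖ ^ 2 ≤ ∑ i, ⟪gi i - hi i, x i - y i⟫ := by
    rw [Finset.mul_sum]
    apply Finset.sum_le_sum
    intro i _
    have hle : αmin ≤ α i := hαmin.1 ⟨i, rfl⟩
    have := strong_mono_pair (α i) (u i) (hstrong i) (hgi i) (hhi i)
    nlinarith [sq_nonneg (‖x i - y i‖)]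
  linarith
end
end

section
/- If for each t ∈ {1,...,T} the cost function c_t : R → R is β_t-strictly increasing (i.e., (c_t(a) − c_t(b))(a − b) ≥ β_t (a − b)² for all a, b), then the map H'(x) = ∏_i { c(Σ_j x_j) + g_i : g_i ∈ ∂(−u_i)(x_i) } is β-aggregatively strongly monotone with β = min_t β_t; that is, for all profiles x, y with aggregates X = Σ_i x_i and Y = Σ_i y_i, and all g ∈ H'(x), h ∈ H'(y): Σ_i ⟨g_i − h_i, x_i − y_i⟩ ≥ β ‖X − Y‖². -/
open scoped RealInnerProductSpace BigOperators

noncomputable section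

/-- If each cost is β_t-strictly increasing, H' is aggregatively strongly monotone
with modulus min_t β_t. -/
theorem agg_strong_monotonicity_of_H' {I T : ℕ}
    (X : Fin I → Set (EuclideanSpace ℝ (Fin T)))
    (hXconv : ∀ i, Convex ℝ (X i)) (hXcpt : ∀ i, IsCompact (X i))
    (u : Fin I → EuclideanSpace ℝ (Fin T) → ℝ)
    (hu : ∀ i, ConcaveOn ℝ Set.univ (u i)) (hucont : ∀ i, Continuous (u i))
    (c : Fin T → ℝ → ℝ) (β : Fin T → ℝ) (hβpos : ∀ t, 0 < β t)
    (hcconv : ∀ t, ConvexOn ℝ Set.univ (c t)) (hccont : ∀ t, Continuous (c t))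
    (hstrict : ∀ t, ∀ a b : ℝ, β t * (a - b) ^ 2 ≤ (c t a - c t b) * (a - b))
    (βmin : ℝ) (hβmin : IsGLB (Set.range β) βmin)
    (x y : Fin I → EuclideanSpace ℝ (Fin T))
    (hx : ∀ i, x i ∈ X i) (hy : ∀ i, y i ∈ X i)
    (g h : Fin I → EuclideanSpace ℝ (Fin T))
    (hg : ∀ i, ∃ gi ∈ subdiff (fun z => - u i z) (x i), g i = cvec c (∑ j, x j) + gi)
    (hh : ∀ i, ∃ hi ∈ subdiff (fun z => - u i z) (y i), h i = cvec c (∑ j, y j) + hi) :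
    βmin * ‖(∑ i, x i) - (∑ i, y i)‖ ^ 2 ≤ ∑ i, ⟪g i - h i, x i - y i⟫ := by
  classical
  choose gi hgi hgdef using hg
  choose hi hhi hhdef using hh
  set Xs : EuclideanSpace ℝ (Fin T) := ∑ j, x j with hXs
  set Ys : EuclideanSpace ℝ (Fin T) := ∑ j, y j with hYs
  have key1 : ∀ i, 0 ≤ ⟪gi i - hi i, x i - y i⟫ := by
    intro i
    have h1 := hgi i (y i)
    have h2 := hhi i (x i)
    simp only [subdiff, Set.mem_setOf_eq] at h1 h2
    simp only [inner_sub_left, inner_sub_right] at h1 h2 ⊢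
    linarith
  have hsum_eq : ∑ i, ⟪g i - h i, x i - y i⟫
      = ⟪cvec c Xs - cvec c Ys, Xs - Ys⟫ + ∑ i, ⟪gi i - hi i, x i - y i⟫ := by
    have : ∀ i, ⟪g i - h i, x i - y i⟫
        = ⟪cvec c Xs - cvec c Ys, x i - y i⟫ + ⟪gi i - hi i, x i - y i⟫ := by
      intro i
      rw [hgdef i, hhdef i]
      have : cvec c Xs + gi i - (cvec c Ys + hi i)
          = (cvec c Xs - cvec c Ys) + (gi i - hi i) := by abel
      rw [this, inner_add_left]
    rw [Finset.sum_congr rfl (fun i _ => this i), Finset.sum_add_distrib]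
    congr 1
    rw [← inner_sum]
    congr 1
    rw [Finset.sum_sub_distrib]
  have hinner : βmin * ‖Xs - Ys‖ ^ 2 ≤ ⟪cvec c Xs - cvec c Ys, Xs - Ys⟫ := by
    have hnorm : ‖Xs - Ys‖ ^ 2 = ∑ t, (Xs t - Ys t) ^ 2 := by
      rw [← real_inner_self_eq_norm_sq]
      rw [PiLp.inner_apply]
      refine Finset.sum_congr rfl fun t _ => ?_
      simp [sq]
    have hip : ⟪cvec c Xs - cvec c Ys, Xs - Ys⟫
        = ∑ t, (c t (Xs t) - c t (Ys t)) * (Xs t - Ys t) := by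
      rw [PiLp.inner_apply]
      refine Finset.sum_congr rfl fun t _ => ?_
      simp [cvec, mul_comm]
    rw [hnorm, hip, Finset.mul_sum]
    refine Finset.sum_le_sum fun t _ => ?_
    have h1 : βmin ≤ β t := hβmin.1 ⟨t, rfl⟩
    have h2 := hstrict t (Xs t) (Ys t)
    nlinarith [sq_nonneg (Xs t - Ys t)]
  have hpos : 0 ≤ ∑ i, ⟪gi i - hi i, x i - y i⟫ :=
    Finset.sum_nonneg fun i _ => key1 i
  calc βmin * ‖Xs - Ys‖ ^ 2 ≤ ⟪cvec c Xs - cvec c Ys, Xs - Ys⟫ := hinner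
    _ ≤ ⟪cvec c Xs - cvec c Ys, Xs - Ys⟫ + ∑ i, ⟪gi i - hi i, x i - y i⟫ := le_add_of_nonneg_right hpos
    _ = ∑ i, ⟪g i - h i, x i - y i⟫ := hsum_eq.symm
end
end

section
/- Let Γ be a set-valued map on ∏_i X_i that is aggregatively strictly monotone: for all x, y and all selections g ∈ Γ(x), h ∈ Γ(y), Σ_i ⟨g_i − h_i, x_i − y_i⟩ ≥ 0, with equality only if Σ_i x_i = Σ_i y_i. Then any two solutions x̂, ŷ of the generalized variational inequality on a set K ⊂ ∏_i X_i have the same aggregate: Σ_i x̂_i = Σ_i ŷ_i. -/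
open scoped RealInnerProductSpace BigOperators

noncomputable section

/-- For an aggregatively strictly monotone set-valued map, any two GVI solutions
have the same aggregate. -/
theorem gvi_same_aggregate_of_agg_strictly_monotone {I T : ℕ}
    (X : Fin I → Set (EuclideanSpace ℝ (Fin T)))
    (hXconv : ∀ i, Convex ℝ (X i))
    (Γ : (Fin I → EuclideanSpace ℝ (Fin T)) → Set (Fin I → EuclideanSpace ℝ (Fin T)))
    (K : Set (Fin I → EuclideanSpace ℝ (Fin T)))
    (hK : K ⊆ {x | ∀ i, x i ∈ X i})
    (hΓne : ∀ x ∈ K, (Γ x).Nonempty)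
    (hmono : ∀ x y, (∀ i, x i ∈ X i) → (∀ i, y i ∈ X i) →
      ∀ g ∈ Γ x, ∀ h ∈ Γ y,
        0 ≤ ∑ i, ⟪g i - h i, x i - y i⟫ ∧
        ((∑ i, ⟪g i - h i, x i - y i⟫) = 0 → (∑ i, x i) = ∑ i, y i))
    (x y : Fin I → EuclideanSpace ℝ (Fin T)) (hx : x ∈ K) (hy : y ∈ K)
    (hgx : ∃ g ∈ Γ x, ∀ z ∈ K, 0 ≤ ∑ i, ⟪g i, z i - x i⟫)
    (hgy : ∃ h ∈ Γ y, ∀ z ∈ K, 0 ≤ ∑ i, ⟪h i, z i - y i⟫) :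
    (∑ i, x i) = ∑ i, y i := by
  obtain ⟨g, hg, hgsol⟩ := hgx
  obtain ⟨h, hh, hhsol⟩ := hgy
  have h1 := hgsol y hy
  have h2 := hhsol x hx
  have key : ∑ i, ⟪g i - h i, x i - y i⟫ ≤ 0 := by
    have : ∑ i, ⟪g i - h i, x i - y i⟫ =
        -(∑ i, ⟪g i, y i - x i⟫) - ∑ i, ⟪h i, x i - y i⟫ := by
      rw [← Finset.sum_neg_distrib, ← Finset.sum_sub_distrib]
      apply Finset.sum_congr rfl
      intro i _
      simp [inner_sub_left, inner_sub_right]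
      ring
    linarith
  have hm := hmono x y (hK hx) (hK hy) g hg h hh
  exact hm.2 (le_antisymm key hm.1)
end
end

section
/- Let x and y be two variational Nash equilibria of an I-player congestion game. Suppose each u_i is α-strongly concave, each c_t is convex non-decreasing with all subgradients along feasible aggregates bounded by C, and each action set X_i is contained in the ball of radius M/I (so that aggregates are bounded by M). Then ‖x − y‖ ≤ 2M √(TC/(αI)). -/
open scoped RealInnerProductSpace BigOperators

noncomputable section

def subdiffR (f : ℝ → ℝ) (x : ℝ) : Set ℝ :=
  {a | ∀ y, f x + a * (y - x) ≤ f y}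

/-- The set `H(x)` of joint subgradients for the atomic game. -/
def Hmap {I T : ℕ} (c : Fin T → ℝ → ℝ) (u : Fin I → EuclideanSpace ℝ (Fin T) → ℝ)
    (x : Fin I → EuclideanSpace ℝ (Fin T)) :
    Set (Fin I → EuclideanSpace ℝ (Fin T)) :=
  {g | ∀ i, ∃ a : Fin T → ℝ, (∀ t, a t ∈ subdiffR (c t) ((∑ j, x j) t)) ∧
      ∃ gu ∈ subdiff (fun z => - u i z) (x i),
        g i = (cvec c (∑ j, x j) + (WithLp.equiv 2 (Fin T → ℝ)).symm (fun t => a t * x i t)) + gu}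

/-- The set `H'(x)` of joint subgradients for the nonatomic game. -/
def Hmap' {I T : ℕ} (c : Fin T → ℝ → ℝ) (u : Fin I → EuclideanSpace ℝ (Fin T) → ℝ)
    (x : Fin I → EuclideanSpace ℝ (Fin T)) :
    Set (Fin I → EuclideanSpace ℝ (Fin T)) :=
  {g | ∀ i, ∃ gu ∈ subdiff (fun z => - u i z) (x i), g i = cvec c (∑ j, x j) + gu}

/-- Variational Nash equilibrium on the coupled feasible set. -/
def isVNE {I T : ℕ} (X : Fin I → Set (EuclideanSpace ℝ (Fin T)))
    (A : Set (EuclideanSpace ℝ (Fin T))) (c : Fin T → ℝ → ℝ)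
    (u : Fin I → EuclideanSpace ℝ (Fin T) → ℝ)
    (x : Fin I → EuclideanSpace ℝ (Fin T)) : Prop :=
  (∀ i, x i ∈ X i) ∧ (∑ i, x i) ∈ A ∧
    ∃ g ∈ Hmap c u x, ∀ z : Fin I → EuclideanSpace ℝ (Fin T),
      (∀ i, z i ∈ X i) → (∑ i, z i) ∈ A → 0 ≤ ∑ i, ⟪g i, z i - x i⟫

/-- Symmetric variational Wardrop equilibrium on the coupled feasible set. -/
def isSVWE {I T : ℕ} (X : Fin I → Set (EuclideanSpace ℝ (Fin T)))
    (A : Set (EuclideanSpace ℝ (Fin T))) (c : Fin T → ℝ → ℝ)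
    (u : Fin I → EuclideanSpace ℝ (Fin T) → ℝ)
    (x : Fin I → EuclideanSpace ℝ (Fin T)) : Prop :=
  (∀ i, x i ∈ X i) ∧ (∑ i, x i) ∈ A ∧
    ∃ g ∈ Hmap' c u x, ∀ z : Fin I → EuclideanSpace ℝ (Fin T),
      (∀ i, z i ∈ X i) → (∑ i, z i) ∈ A → 0 ≤ ∑ i, ⟪g i, z i - x i⟫


lemma coord_abs_le_norm {T : ℕ} (v : EuclideanSpace ℝ (Fin T)) (t : Fin T) : |v t| ≤ ‖v‖ := by
  have h1 : |v t|^2 ≤ ‖v‖^2 := by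
    rw [sq_abs, ← real_inner_self_eq_norm_sq]
    simp only [PiLp.inner_apply, RCLike.inner_apply, conj_trivial]
    have := Finset.single_le_sum (f := fun s => v s * v s)
      (fun s _ => mul_self_nonneg (v s)) (Finset.mem_univ t)
    simpa [sq] using this
  have h2 := Real.sqrt_le_sqrt h1
  rwa [Real.sqrt_sq_eq_abs, Real.sqrt_sq_eq_abs, abs_abs, abs_norm] at h2

lemma strengthened_subgrad {T : ℕ} {f : EuclideanSpace ℝ (Fin T) → ℝ} {α : ℝ} (hα : 0 ≤ α)
    (hconv : ConvexOn ℝ Set.univ (fun z => f z - (α/2) * ‖z‖^2))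
    {x g : EuclideanSpace ℝ (Fin T)} (hg : g ∈ subdiff f x) (z : EuclideanSpace ℝ (Fin T)) :
    f x + ⟪g, z - x⟫ + (α/2) * ‖z - x‖^2 ≤ f z := by
  set K := (α/2) * ‖z - x‖^2 with hKdef
  have hK0 : 0 ≤ K := by positivity
  have key : ∀ l : ℝ, 0 < l → l ≤ 1 →
      f x + ⟪g, z - x⟫ + (1 - l) * K ≤ f z := by
    intro l hl0 hl1
    set w : EuclideanSpace ℝ (Fin T) := (1 - l) • x + l • z with hw
    have h1 : f x + l * ⟪g, z - x⟫ ≤ f w := by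
      have hx1 := hg w
      have hwx : w - x = l • (z - x) := by
        rw [hw]; module
      rw [hwx, real_inner_smul_right] at hx1
      linarith
    have hnorm : (1 - l) * ‖x‖^2 + l * ‖z‖^2 - ‖w‖^2 = l * (1 - l) * ‖z - x‖^2 := by
      have e1 : ‖w‖^2 = ⟪w, w⟫ := (real_inner_self_eq_norm_sq w).symm
      have e2 : ‖z - x‖^2 = ⟪z - x, z - x⟫ := (real_inner_self_eq_norm_sq _).symm
      have e3 : ‖x‖^2 = ⟪x, x⟫ := (real_inner_self_eq_norm_sq _).symm
      have e4 : ‖z‖^2 = ⟪z, z⟫ := (real_inner_self_eq_norm_sq _).symm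
      rw [e1, e2, e3, e4, hw]
      simp only [inner_add_left, inner_add_right, inner_sub_left, inner_sub_right,
        real_inner_smul_left, real_inner_smul_right, real_inner_comm x z]
      ring
    have h2 : f w ≤ (1 - l) * f x + l * f z - (α/2) * (l * (1 - l) * ‖z - x‖^2) := by
      have hc := hconv.2 (Set.mem_univ x) (Set.mem_univ z)
        (by linarith : (0:ℝ) ≤ 1 - l) (le_of_lt hl0) (by ring)
      simp only [smul_eq_mul] at hc
      rw [← hw] at hc
      have hn2 : (α/2)*((1-l)*‖x‖^2 + l*‖z‖^2 - ‖w‖^2) = (α/2)*(l*(1-l)*‖z-x‖^2) := by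
        rw [hnorm]
      nlinarith [hc, hn2]
    have h3 : l * (f x + ⟪g, z - x⟫ + (1 - l) * K) ≤ l * f z := by
      rw [hKdef]; nlinarith [h1, h2]
    exact le_of_mul_le_mul_left h3 hl0
  apply le_of_forall_pos_le_add
  intro ε hε
  set l : ℝ := min 1 (ε / (K + 1)) with hl
  have hl0 : 0 < l := lt_min one_pos (by positivity)
  have hl1 : l ≤ 1 := min_le_left _ _
  have hlK : l * K ≤ ε := by
    have h4 : l ≤ ε / (K + 1) := min_le_right _ _
    have h5 : l * K ≤ (ε / (K + 1)) * K := mul_le_mul_of_nonneg_right h4 hK0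
    have h6 : (ε / (K + 1)) * K ≤ ε := by
      rw [div_mul_eq_mul_div, div_le_iff₀ (by linarith)]
      nlinarith
    linarith
  have := key l hl0 hl1
  linarith

lemma strong_mono {T : ℕ} {f : EuclideanSpace ℝ (Fin T) → ℝ} {α : ℝ} (hα : 0 ≤ α)
    (hconv : ConvexOn ℝ Set.univ (fun z => f z - (α/2) * ‖z‖^2))
    {x y g h : EuclideanSpace ℝ (Fin T)} (hg : g ∈ subdiff f x) (hh : h ∈ subdiff f y) :
    α * ‖x - y‖^2 ≤ ⟪g - h, x - y⟫ := by
  have h1 := strengthened_subgrad hα hconv hg y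
  have h2 := strengthened_subgrad hα hconv hh x
  have e1 : ⟪g, y - x⟫ = -⟪g, x - y⟫ := by
    rw [← inner_neg_right]; congr 1; abel
  have e2 : ‖y - x‖ = ‖x - y‖ := norm_sub_rev _ _
  rw [e1, e2] at h1
  rw [inner_sub_left]
  linarith

/-- Two VNEs of a large congestion game with strongly concave utilities are close. -/
theorem VNEs_close_strong_concavity {I T : ℕ} (hI : 0 < I)
    (X : Fin I → Set (EuclideanSpace ℝ (Fin T)))
    (hXconv : ∀ i, Convex ℝ (X i)) (hXcpt : ∀ i, IsCompact (X i))
    (A : Set (EuclideanSpace ℝ (Fin T))) (hAconv : Convex ℝ A) (hAcl : IsClosed A)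
    (c : Fin T → ℝ → ℝ) (hcconv : ∀ t, ConvexOn ℝ Set.univ (c t))
    (hcmono : ∀ t, Monotone (c t)) (hccont : ∀ t, Continuous (c t))
    (u : Fin I → EuclideanSpace ℝ (Fin T) → ℝ) (hucont : ∀ i, Continuous (u i))
    (α : ℝ) (hα : 0 < α)
    (hstrong : ∀ i, ConvexOn ℝ Set.univ (fun z => - u i z - (α / 2) * ‖z‖ ^ 2))
    (M C : ℝ)
    (hM : ∀ i, ∀ v ∈ X i, ‖v‖ ≤ M / I)
    (hC : ∀ z : Fin I → EuclideanSpace ℝ (Fin T), (∀ i, z i ∈ X i) →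
      ∀ t, ∀ a ∈ subdiffR (c t) ((∑ i, z i) t), |a| ≤ C)
    (x y : Fin I → EuclideanSpace ℝ (Fin T))
    (hx : isVNE X A c u x) (hy : isVNE X A c u y) :
    Real.sqrt (∑ i, ‖x i - y i‖ ^ 2) ≤ 2 * M * Real.sqrt (T * C / (α * I)) := by
  obtain ⟨hxX, hxA, g, hgH, hgVI⟩ := hx
  obtain ⟨hyX, hyA, h, hhH, hhVI⟩ := hy
  simp only [Hmap, Set.mem_setOf_eq] at hgH hhH
  choose a ha gu hgu hgeq using hgH
  choose b hb hu hhu hheq using hhH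
  have hIpos : (0:ℝ) < I := by exact_mod_cast hI
  have hM0 : 0 ≤ M := by
    have h0 : (0:ℝ) ≤ M / I :=
      le_trans (norm_nonneg _) (hM ⟨0, hI⟩ _ (hxX ⟨0, hI⟩))
    have := (le_div_iff₀ hIpos).mp h0
    simpa using this
  have hxb : ∀ i t, |x i t| ≤ M / I :=
    fun i t => le_trans (coord_abs_le_norm _ t) (hM i _ (hxX i))
  have hyb : ∀ i t, |y i t| ≤ M / I :=
    fun i t => le_trans (coord_abs_le_norm _ t) (hM i _ (hyX i))
  have hab : ∀ i t, |a i t| ≤ C := fun i t => hC x hxX t _ (ha i t)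
  have hbb : ∀ i t, |b i t| ≤ C := fun i t => hC y hyX t _ (hb i t)
  have VI1 := hgVI y hyX hyA
  have VI2 := hhVI x hxX hxA
  have hsum0 : ∑ i, ⟪g i - h i, x i - y i⟫ ≤ 0 := by
    have e : ∀ i, ⟪g i - h i, x i - y i⟫ = -⟪g i, y i - x i⟫ - ⟪h i, x i - y i⟫ := by
      intro i
      have e1 : ⟪g i, y i - x i⟫ = -⟪g i, x i - y i⟫ := by
        rw [← inner_neg_right]; congr 1; abel
      rw [inner_sub_left, e1]; ring
    calc ∑ i, ⟪g i - h i, x i - y i⟫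
        = ∑ i, (-⟪g i, y i - x i⟫ - ⟪h i, x i - y i⟫) :=
          Finset.sum_congr rfl (fun i _ => e i)
      _ = -(∑ i, ⟪g i, y i - x i⟫) - ∑ i, ⟪h i, x i - y i⟫ := by
          rw [Finset.sum_sub_distrib, Finset.sum_neg_distrib]
      _ ≤ 0 := by linarith
  set cX : EuclideanSpace ℝ (Fin T) := cvec c (∑ j, x j) with hcX
  set cY : EuclideanSpace ℝ (Fin T) := cvec c (∑ j, y j) with hcY
  set axv : Fin I → EuclideanSpace ℝ (Fin T) :=
    fun i => (WithLp.equiv 2 (Fin T → ℝ)).symm (fun t => a i t * x i t) with haxv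
  set byv : Fin I → EuclideanSpace ℝ (Fin T) :=
    fun i => (WithLp.equiv 2 (Fin T → ℝ)).symm (fun t => b i t * y i t) with hbyv
  have hsplit : ∀ i, ⟪g i - h i, x i - y i⟫ =
      ⟪cX - cY, x i - y i⟫ + ⟪axv i - byv i, x i - y i⟫ + ⟪gu i - hu i, x i - y i⟫ := by
    intro i
    rw [hgeq i, hheq i]
    simp only [inner_sub_left, inner_add_left]
    ring
  have hT3 : ∀ i, α * ‖x i - y i‖^2 ≤ ⟪gu i - hu i, x i - y i⟫ :=
    fun i => strong_mono hα.le (hstrong i) (hgu i) (hhu i)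
  have hT1 : 0 ≤ ∑ i, ⟪cX - cY, x i - y i⟫ := by
    have e1 : ∑ i, ⟪cX - cY, x i - y i⟫ = ⟪cX - cY, (∑ j, x j) - (∑ j, y j)⟫ := by
      rw [← inner_sum]
      congr 1
      rw [Finset.sum_sub_distrib]
    rw [e1]
    have e2 : ⟪cX - cY, (∑ j, x j) - (∑ j, y j)⟫ =
        ∑ t, (c t ((∑ j, x j) t) - c t ((∑ j, y j) t)) * ((∑ j, x j) t - (∑ j, y j) t) := by
      simp only [PiLp.inner_apply, RCLike.inner_apply, conj_trivial]
      exact Finset.sum_congr rfl (fun t _ => by rw [mul_comm]; rfl)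
    rw [e2]
    apply Finset.sum_nonneg
    intro t _
    rcases le_total ((∑ j, x j) t) ((∑ j, y j) t) with hle | hle
    · have h1 := sub_nonpos.mpr (hcmono t hle)
      have h2 := sub_nonpos.mpr hle
      nlinarith
    · exact mul_nonneg (sub_nonneg.mpr (hcmono t hle)) (sub_nonneg.mpr hle)
  have hT2 : ∀ i, -(T * (4 * C * M^2 / I^2)) ≤ ⟪axv i - byv i, x i - y i⟫ := by
    intro i
    have expand : ⟪axv i - byv i, x i - y i⟫ =
        ∑ t, (a i t * x i t - b i t * y i t) * (x i t - y i t) := by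
      simp only [PiLp.inner_apply, RCLike.inner_apply, conj_trivial]
      exact Finset.sum_congr rfl (fun t _ => by rw [mul_comm]; rfl)
    rw [expand]
    have hterm : ∀ t : Fin T,
        -(4 * C * M^2 / I^2) ≤ (a i t * x i t - b i t * y i t) * (x i t - y i t) := by
      intro t
      have hC0 : 0 ≤ C := le_trans (abs_nonneg _) (hab i t)
      have hMI0 : 0 ≤ M / I := div_nonneg hM0 hIpos.le
      have hfac1 : |a i t * x i t - b i t * y i t| ≤ 2 * C * M / I := by
        calc |a i t * x i t - b i t * y i t| ≤ |a i t * x i t| + |b i t * y i t| :=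
              abs_sub _ _
          _ = |a i t| * |x i t| + |b i t| * |y i t| := by rw [abs_mul, abs_mul]
          _ ≤ C * (M / I) + C * (M / I) :=
              add_le_add (mul_le_mul (hab i t) (hxb i t) (abs_nonneg _) hC0)
                (mul_le_mul (hbb i t) (hyb i t) (abs_nonneg _) hC0)
          _ = 2 * C * M / I := by ring
      have hfac2 : |x i t - y i t| ≤ 2 * M / I := by
        calc |x i t - y i t| ≤ |x i t| + |y i t| := abs_sub _ _
          _ ≤ M / I + M / I := add_le_add (hxb i t) (hyb i t)
          _ = 2 * M / I := by ring
      have habs : |(a i t * x i t - b i t * y i t) * (x i t - y i t)| ≤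
          (2 * C * M / I) * (2 * M / I) := by
        rw [abs_mul]
        exact mul_le_mul hfac1 hfac2 (abs_nonneg _) (by positivity)
      have hneg := neg_abs_le ((a i t * x i t - b i t * y i t) * (x i t - y i t))
      have hB : (2 * C * M / I) * (2 * M / I) = 4 * C * M^2 / I^2 := by ring
      linarith
    calc -(↑T * (4 * C * M^2 / I^2)) = ∑ _t : Fin T, -(4 * C * M^2 / I^2) := by
          rw [Finset.sum_const, Finset.card_univ, Fintype.card_fin]
          push_cast; ring
      _ ≤ _ := Finset.sum_le_sum (fun t _ => hterm t)
  have hsum_split : ∑ i, ⟪g i - h i, x i - y i⟫ =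
      (∑ i, ⟪cX - cY, x i - y i⟫) + (∑ i, ⟪axv i - byv i, x i - y i⟫)
        + (∑ i, ⟪gu i - hu i, x i - y i⟫) := by
    rw [← Finset.sum_add_distrib, ← Finset.sum_add_distrib]
    exact Finset.sum_congr rfl (fun i _ => hsplit i)
  have s3 : α * ∑ i, ‖x i - y i‖^2 ≤ ∑ i, ⟪gu i - hu i, x i - y i⟫ := by
    rw [Finset.mul_sum]
    exact Finset.sum_le_sum (fun i _ => hT3 i)
  have s2 : -(↑I * (↑T * (4 * C * M^2 / I^2))) ≤ ∑ i, ⟪axv i - byv i, x i - y i⟫ := by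
    calc -(↑I * (↑T * (4 * C * M^2 / I^2)))
        = ∑ _i : Fin I, -(↑T * (4 * C * M^2 / I^2)) := by
          rw [Finset.sum_const, Finset.card_univ, Fintype.card_fin]
          push_cast; ring
      _ ≤ _ := Finset.sum_le_sum (fun i _ => hT2 i)
  have key : α * ∑ i, ‖x i - y i‖^2 ≤ ↑I * (↑T * (4 * C * M^2 / I^2)) := by
    linarith
  have hS2 : ∑ i, ‖x i - y i‖^2 ≤ (2 * M)^2 * (↑T * C / (α * ↑I)) := by
    have hIne : (I:ℝ) ≠ 0 := ne_of_gt hIpos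
    have hαne : α ≠ 0 := ne_of_gt hα
    have hring : ↑I * (↑T * (4 * C * M^2 / I^2)) = α * ((2 * M)^2 * (↑T * C / (α * ↑I))) := by
      field_simp
      ring
    rw [hring] at key
    exact le_of_mul_le_mul_left key hα
  calc Real.sqrt (∑ i, ‖x i - y i‖^2)
      ≤ Real.sqrt ((2 * M)^2 * (↑T * C / (α * ↑I))) := Real.sqrt_le_sqrt hS2
    _ = 2 * M * Real.sqrt (↑T * C / (α * ↑I)) := by
        rw [Real.sqrt_mul (by positivity), Real.sqrt_sq (by linarith)]
end
end

section
/- Let x ∈ F(A) be a variational Nash equilibrium (solution of the GVI with subgradient map H including the terms (a_{i,t} x_{i,t})_t) and x* ∈ F(A) a symmetric variational Wardrop equilibrium (solution of the GVI with the map H' omitting those terms). If each u_i is α-strongly concave, then ‖x − x*‖ ≤ M √(2TC/(αI)); if instead each c_t is β-strictly increasing, then the aggregates satisfy ‖Σ_i x_i − Σ_i x*_i‖ ≤ M √(2TC/(βI)). -/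
open scoped RealInnerProductSpace BigOperators

noncomputable section

section helpers
variable {T : ℕ}

lemma my_subdiff_mono {f : EuclideanSpace ℝ (Fin T) → ℝ} {x y g h : EuclideanSpace ℝ (Fin T)}
    (hg : g ∈ subdiff f x) (hh : h ∈ subdiff f y) :
    ⟪g - h, y - x⟫ ≤ 0 := by
  have h1 := hg y
  have h2 := hh x
  have e1 : ⟪h, x - y⟫ = -⟪h, y - x⟫ := by
    rw [← inner_neg_right]; congr 1; abel
  rw [inner_sub_left]
  linarith

lemma my_norm_combo (x y : EuclideanSpace ℝ (Fin T)) (lam : ℝ) :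
    ‖x + lam • (y - x)‖^2 = (1-lam)*‖x‖^2 + lam*‖y‖^2 - lam*(1-lam)*‖y-x‖^2 := by
  have h1 : ‖x + lam • (y - x)‖^2 = ‖x‖^2 + 2 * (lam * ⟪x, y - x⟫) + lam^2 * ‖y - x‖^2 := by
    rw [norm_add_sq_real, inner_smul_right, norm_smul, mul_pow, Real.norm_eq_abs, sq_abs]
  have h2 : ‖y‖^2 = ‖x‖^2 + 2 * ⟪x, y - x⟫ + ‖y - x‖^2 := by
    have := norm_add_sq_real x (y - x)
    simpa using this
  rw [h1, h2]; ring

lemma my_subdiff_strong {f : EuclideanSpace ℝ (Fin T) → ℝ} {α : ℝ} (hα : 0 < α)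
    (hconv : ConvexOn ℝ Set.univ (fun z : EuclideanSpace ℝ (Fin T) => f z - (α/2)*‖z‖^2))
    {x g : EuclideanSpace ℝ (Fin T)} (hg : g ∈ subdiff f x) (y : EuclideanSpace ℝ (Fin T)) :
    f x + ⟪g, y - x⟫ + (α/2)*‖y-x‖^2 ≤ f y := by
  have key : ∀ lam : ℝ, 0 < lam → lam ≤ 1 →
      f x + ⟪g, y - x⟫ + (α/2)*(1-lam)*‖y-x‖^2 ≤ f y := by
    intro lam h0 h1
    have hz := hg (x + lam • (y - x))
    have hin : ⟪g, (x + lam • (y-x)) - x⟫ = lam * ⟪g, y-x⟫ := by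
      rw [add_sub_cancel_left, inner_smul_right]
    rw [hin] at hz
    have hcv := hconv.2 (Set.mem_univ x) (Set.mem_univ y) (by linarith : (0:ℝ) ≤ 1 - lam)
      (le_of_lt h0) (by ring)
    simp only [smul_eq_mul] at hcv
    have hpt : (1-lam) • x + lam • y = x + lam • (y - x) := by
      rw [smul_sub]; module
    rw [hpt] at hcv
    have hn := my_norm_combo x y lam
    nlinarith [hz, hcv, hn]
  refine le_of_forall_pos_le_add ?_
  intro ε hε
  set K := (α/2)*‖y-x‖^2 with hK
  have hK0 : 0 ≤ K := by positivity
  set lam := min 1 (ε/(K+1)) with hlam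
  have h0 : 0 < lam := by
    apply lt_min one_pos; positivity
  have h1 : lam ≤ 1 := min_le_left _ _
  have h2 : lam ≤ ε/(K+1) := min_le_right _ _
  have := key lam h0 h1
  have hle : lam * K ≤ ε := by
    have h3 : lam * (K+1) ≤ ε := by
      calc lam * (K+1) ≤ (ε/(K+1)) * (K+1) := by nlinarith
        _ = ε := by field_simp
    nlinarith
  nlinarith [this]

lemma my_subdiff_strong_mono {f : EuclideanSpace ℝ (Fin T) → ℝ} {α : ℝ} (hα : 0 < α)
    (hconv : ConvexOn ℝ Set.univ (fun z : EuclideanSpace ℝ (Fin T) => f z - (α/2)*‖z‖^2))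
    {x y g h : EuclideanSpace ℝ (Fin T)} (hg : g ∈ subdiff f x) (hh : h ∈ subdiff f y) :
    ⟪g - h, y - x⟫ ≤ -(α * ‖y-x‖^2) := by
  have h1 := my_subdiff_strong hα hconv hg y
  have h2 := my_subdiff_strong hα hconv hh x
  have e1 : ⟪h, x - y⟫ = -⟪h, y - x⟫ := by
    rw [← inner_neg_right]; congr 1; abel
  have e2 : ‖x - y‖ = ‖y - x‖ := norm_sub_rev _ _
  rw [inner_sub_left]
  rw [e1, e2] at h2
  nlinarith [h1, h2]

lemma my_norm_sq_sum (v : EuclideanSpace ℝ (Fin T)) : ‖v‖^2 = ∑ t, v t * v t := by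
  rw [← real_inner_self_eq_norm_sq]
  simp [PiLp.inner_apply, RCLike.inner_apply]
  rw [EuclideanSpace.norm_sq_eq]
  exact Finset.sum_congr rfl fun t _ => by rw [Real.norm_eq_abs, sq_abs, sq]

end helpers

set_option maxHeartbeats 2000000 in
/-- The SVWE is close to any VNE: in individual strategies under strong concavity
of the utilities, and in aggregates under strict increase of the costs. -/
theorem SVWE_close_to_VNE {I T : ℕ} (hI : 0 < I)
    (X : Fin I → Set (EuclideanSpace ℝ (Fin T)))
    (hXconv : ∀ i, Convex ℝ (X i)) (hXcpt : ∀ i, IsCompact (X i))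
    (A : Set (EuclideanSpace ℝ (Fin T))) (hAconv : Convex ℝ A) (hAcl : IsClosed A)
    (c : Fin T → ℝ → ℝ) (hcconv : ∀ t, ConvexOn ℝ Set.univ (c t))
    (hcmono : ∀ t, Monotone (c t)) (hccont : ∀ t, Continuous (c t))
    (u : Fin I → EuclideanSpace ℝ (Fin T) → ℝ) (hucont : ∀ i, Continuous (u i))
    (hu : ∀ i, ConcaveOn ℝ Set.univ (u i))
    (M C : ℝ)
    (hM : ∀ i, ∀ v ∈ X i, ‖v‖ ≤ M / I)
    (hC : ∀ z : Fin I → EuclideanSpace ℝ (Fin T), (∀ i, z i ∈ X i) →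
      ∀ t, ∀ a ∈ subdiffR (c t) ((∑ i, z i) t), |a| ≤ C)
    (x xs : Fin I → EuclideanSpace ℝ (Fin T))
    (hx : isVNE X A c u x) (hxs : isSVWE X A c u xs) :
    (∀ α : ℝ, 0 < α →
      (∀ i, ConvexOn ℝ Set.univ (fun z => - u i z - (α / 2) * ‖z‖ ^ 2)) →
      Real.sqrt (∑ i, ‖x i - xs i‖ ^ 2) ≤ M * Real.sqrt (2 * T * C / (α * I))) ∧
    (∀ β : ℝ, 0 < β →
      (∀ t, ∀ a b : ℝ, β * (a - b) ^ 2 ≤ (c t a - c t b) * (a - b)) →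
      ‖(∑ i, x i) - (∑ i, xs i)‖ ≤ M * Real.sqrt (2 * T * C / (β * I))) := by
  obtain ⟨hxX, hxA, g, hg, hgvi⟩ := hx
  obtain ⟨hxsX, hxsA, g', hg', hgvi'⟩ := hxs
  have hIpos : (0:ℝ) < I := by exact_mod_cast hI
  have i0 : Fin I := ⟨0, hI⟩
  have hM0 : 0 ≤ M := by
    have h1 : (0:ℝ) ≤ M / I := (norm_nonneg (x i0)).trans (hM i0 (x i0) (hxX i0))
    have := mul_nonneg h1 (le_of_lt hIpos)
    rwa [div_mul_cancel₀ _ (ne_of_gt hIpos)] at this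
  -- trivial case T = 0
  rcases Nat.eq_zero_or_pos T with hT | hT
  · subst hT
    have hzero : ∀ v : EuclideanSpace ℝ (Fin 0), v = 0 := by
      intro v; ext t; exact t.elim0
    constructor
    · intro α hα _
      have : ∀ i, ‖x i - xs i‖ ^ 2 = 0 := by
        intro i; rw [hzero (x i - xs i)]; simp
      simp only [this, Finset.sum_const_zero, Real.sqrt_zero]
      exact mul_nonneg hM0 (Real.sqrt_nonneg _)
    · intro β hβ _
      rw [hzero ((∑ i, x i) - (∑ i, xs i))]
      simp only [norm_zero]
      exact mul_nonneg hM0 (Real.sqrt_nonneg _)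
  -- main case T > 0
  have S1 := hgvi xs hxsX hxsA
  have S2 := hgvi' x hxX hxA
  choose a ha gu hgu hgeq using hg
  choose gu' hgu' hgeq' using hg'
  have hCabs : ∀ i t, |a i t| ≤ C := fun i t => hC x hxX t (a i t) (ha i t)
  obtain ⟨Xb, hXbdef⟩ : ∃ v : EuclideanSpace ℝ (Fin T), v = ∑ j, x j := ⟨_, rfl⟩
  obtain ⟨Xsb, hXsbdef⟩ : ∃ v : EuclideanSpace ℝ (Fin T), v = ∑ j, xs j := ⟨_, rfl⟩
  rw [← hXbdef] at ha hgeq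
  rw [← hXsbdef] at hgeq'
  set axv : Fin I → EuclideanSpace ℝ (Fin T) :=
    fun i => (WithLp.equiv 2 (Fin T → ℝ)).symm (fun t => a i t * x i t) with haxv
  have t0 : Fin T := ⟨0, hT⟩
  have hC0 : 0 ≤ C := (abs_nonneg (a i0 t0)).trans (hCabs i0 t0)
  have hT1 : (1:ℝ) ≤ T := by exact_mod_cast hT
  -- basic norm bounds
  have hxb : ∀ i, ‖x i‖ ≤ M / I := fun i => hM i (x i) (hxX i)
  have hxsb : ∀ i, ‖xs i‖ ≤ M / I := fun i => hM i (xs i) (hxsX i)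
  have hdb : ∀ i, ‖xs i - x i‖ ≤ 2 * M / I := by
    intro i
    calc ‖xs i - x i‖ ≤ ‖xs i‖ + ‖x i‖ := norm_sub_le _ _
      _ ≤ M / I + M / I := add_le_add (hxsb i) (hxb i)
      _ = 2 * M / I := by ring
  -- the summed VI inequality
  have hsum : (0:ℝ) ≤ ∑ i, (⟪g i, xs i - x i⟫ + ⟪g' i, x i - xs i⟫) := by
    rw [Finset.sum_add_distrib]; linarith
  -- decomposition
  have hdecomp : ∀ i, ⟪g i, xs i - x i⟫ + ⟪g' i, x i - xs i⟫ =
      ⟪cvec c Xb - cvec c Xsb, xs i - x i⟫ + ⟪axv i, xs i - x i⟫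
        + ⟪gu i - gu' i, xs i - x i⟫ := by
    intro i
    rw [hgeq i, hgeq' i]
    have e : x i - xs i = -(xs i - x i) := by abel
    rw [e, inner_neg_right]
    simp only [inner_add_left, inner_sub_left]
    ring
  have hsum2 : (0:ℝ) ≤ ⟪cvec c Xb - cvec c Xsb, Xsb - Xb⟫
      + ∑ i, ⟪axv i, xs i - x i⟫ + ∑ i, ⟪gu i - gu' i, xs i - x i⟫ := by
    have e1 : ∑ i, (⟪g i, xs i - x i⟫ + ⟪g' i, x i - xs i⟫)
        = ∑ i, ⟪cvec c Xb - cvec c Xsb, xs i - x i⟫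
          + ∑ i, ⟪axv i, xs i - x i⟫ + ∑ i, ⟪gu i - gu' i, xs i - x i⟫ := by
      rw [← Finset.sum_add_distrib, ← Finset.sum_add_distrib]
      exact Finset.sum_congr rfl fun i _ => hdecomp i
    have e2 : ∑ i, ⟪cvec c Xb - cvec c Xsb, xs i - x i⟫
        = ⟪cvec c Xb - cvec c Xsb, Xsb - Xb⟫ := by
      rw [← inner_sum]
      congr 1
      rw [hXsbdef, hXbdef, ← Finset.sum_sub_distrib]
    rw [e1, e2] at hsum
    exact hsum
  -- bound on the extra term
  have hBi : ∀ i, ⟪axv i, xs i - x i⟫ ≤ C * (M / I) * (2 * M / I) := by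
    intro i
    have h1 : ⟪axv i, xs i - x i⟫ ≤ ‖axv i‖ * ‖xs i - x i‖ := real_inner_le_norm _ _
    have h2 : ‖axv i‖ ≤ C * ‖x i‖ := by
      have hsq : ∀ t : Fin T, ‖axv i t‖^2 ≤ C^2 * ‖x i t‖^2 := by
        intro t
        have hat := hCabs i t
        have h0 : axv i t = a i t * x i t := rfl
        rw [h0]
        simp only [Real.norm_eq_abs, sq_abs]
        have h3 : (a i t)^2 ≤ C^2 := by nlinarith [abs_nonneg (a i t), sq_abs (a i t)]
        nlinarith [sq_nonneg (x i t)]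
      rw [EuclideanSpace.norm_eq, EuclideanSpace.norm_eq]
      have h4 : ∑ t, ‖axv i t‖^2 ≤ C^2 * ∑ t, ‖x i t‖^2 := by
        rw [Finset.mul_sum]
        exact Finset.sum_le_sum fun t _ => hsq t
      calc Real.sqrt (∑ t, ‖axv i t‖^2) ≤ Real.sqrt (C^2 * ∑ t, ‖x i t‖^2) :=
            Real.sqrt_le_sqrt h4
        _ = C * Real.sqrt (∑ t, ‖x i t‖^2) := by
            rw [Real.sqrt_mul (sq_nonneg C), Real.sqrt_sq hC0]
    have h5 : (0:ℝ) ≤ M / I := div_nonneg hM0 hIpos.le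
    calc ⟪axv i, xs i - x i⟫ ≤ ‖axv i‖ * ‖xs i - x i‖ := h1
      _ ≤ (C * ‖x i‖) * ‖xs i - x i‖ := mul_le_mul_of_nonneg_right h2 (norm_nonneg _)
      _ ≤ (C * (M / I)) * (2 * M / I) := by
          apply mul_le_mul (mul_le_mul_of_nonneg_left (hxb i) hC0) (hdb i) (norm_nonneg _)
            (mul_nonneg hC0 h5)
      _ = C * (M / I) * (2 * M / I) := rfl
  have hB : ∑ i, ⟪axv i, xs i - x i⟫ ≤ 2 * C * M ^ 2 / I := by
    calc ∑ i, ⟪axv i, xs i - x i⟫ ≤ ∑ _i : Fin I, C * (M / I) * (2 * M / I) :=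
          Finset.sum_le_sum fun i _ => hBi i
      _ = I * (C * (M / I) * (2 * M / I)) := by
          rw [Finset.sum_const, Finset.card_univ, Fintype.card_fin, nsmul_eq_mul]
      _ = 2 * C * M ^ 2 / I := by field_simp
  have hAeq : ⟪cvec c Xb - cvec c Xsb, Xsb - Xb⟫
      = ∑ t, (c t (Xb t) - c t (Xsb t)) * (Xsb t - Xb t) := by
    rw [PiLp.inner_apply]
    apply Finset.sum_congr rfl
    intro t _
    have e1 : (cvec c Xb - cvec c Xsb) t = c t (Xb t) - c t (Xsb t) := rfl
    have e2 : (Xsb - Xb) t = Xsb t - Xb t := rfl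
    rw [e1, e2, RCLike.inner_apply]
    simp [mul_comm]
  have hnormagg : ‖Xb - Xsb‖ ^ 2 = ∑ t, (Xb t - Xsb t) ^ 2 := by
    rw [my_norm_sq_sum]
    apply Finset.sum_congr rfl
    intro t _
    have e : (Xb - Xsb) t = Xb t - Xsb t := rfl
    rw [e]; ring
  constructor
  · -- strong concavity case
    intro α hα hstrong
    have hA0 : ⟪cvec c Xb - cvec c Xsb, Xsb - Xb⟫ ≤ 0 := by
      rw [hAeq]
      apply Finset.sum_nonpos
      intro t _
      rcases le_total (Xb t) (Xsb t) with h | h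
      · have := hcmono t h; nlinarith
      · have := hcmono t h; nlinarith
    have hCα : ∀ i, ⟪gu i - gu' i, xs i - x i⟫ ≤ -(α * ‖xs i - x i‖ ^ 2) := fun i =>
      my_subdiff_strong_mono (f := fun z => - u i z) hα (hstrong i) (hgu i) (hgu' i)
    have hCsum : ∑ i, ⟪gu i - gu' i, xs i - x i⟫ ≤ -(α * ∑ i, ‖xs i - x i‖ ^ 2) := by
      calc ∑ i, ⟪gu i - gu' i, xs i - x i⟫ ≤ ∑ i, -(α * ‖xs i - x i‖ ^ 2) :=
            Finset.sum_le_sum fun i _ => hCα i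
        _ = -(α * ∑ i, ‖xs i - x i‖ ^ 2) := by
            simp [Finset.mul_sum]
    have hsumd : α * ∑ i, ‖xs i - x i‖ ^ 2 ≤ 2 * C * M ^ 2 / I := by
      linarith [hsum2, hA0, hB, hCsum]
    have h2 : ∑ i, ‖x i - xs i‖ ^ 2 = ∑ i, ‖xs i - x i‖ ^ 2 :=
      Finset.sum_congr rfl fun i _ => by rw [norm_sub_rev]
    have hfin : ∑ i, ‖x i - xs i‖ ^ 2 ≤ M ^ 2 * (2 * T * C / (α * I)) := by
      rw [h2]
      have h3 : ∑ i, ‖xs i - x i‖ ^ 2 ≤ 2 * C * M ^ 2 / (α * I) := by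
        rw [le_div_iff₀ (by positivity : (0:ℝ) < α * I)]
        have h4 : α * (∑ i, ‖xs i - x i‖ ^ 2) * I ≤ (2 * C * M ^ 2 / I) * I := by
          nlinarith [hsumd, hIpos]
        rw [div_mul_cancel₀ _ (ne_of_gt hIpos)] at h4
        nlinarith [h4]
      have h5 : 2 * C * M ^ 2 / (α * I) ≤ M ^ 2 * (2 * T * C / (α * I)) := by
        rw [mul_div_assoc']
        have h6 : 2 * C * M ^ 2 ≤ M ^ 2 * (2 * T * C) := by
          nlinarith [mul_nonneg (mul_nonneg (sub_nonneg.mpr hT1) hC0) (sq_nonneg M)]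
        exact (div_le_div_iff_of_pos_right (by positivity)).mpr h6
      linarith
    calc Real.sqrt (∑ i, ‖x i - xs i‖ ^ 2)
        ≤ Real.sqrt (M ^ 2 * (2 * T * C / (α * I))) := Real.sqrt_le_sqrt hfin
      _ = M * Real.sqrt (2 * T * C / (α * I)) := by
          rw [Real.sqrt_mul (sq_nonneg M), Real.sqrt_sq hM0]
  · -- strictly increasing cost case
    intro β hβ hβc
    rw [← hXbdef, ← hXsbdef]
    have hC0' : ∑ i, ⟪gu i - gu' i, xs i - x i⟫ ≤ 0 :=
      Finset.sum_nonpos fun i _ => my_subdiff_mono (hgu i) (hgu' i)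
    have hAβ : ⟪cvec c Xb - cvec c Xsb, Xsb - Xb⟫ ≤ -(β * ‖Xb - Xsb‖ ^ 2) := by
      rw [hAeq, hnormagg, Finset.mul_sum, ← Finset.sum_neg_distrib]
      apply Finset.sum_le_sum
      intro t _
      have := hβc t (Xb t) (Xsb t)
      nlinarith
    have hsumd : β * ‖Xb - Xsb‖ ^ 2 ≤ 2 * C * M ^ 2 / I := by
      linarith [hsum2, hAβ, hB, hC0']
    have hfin : ‖Xb - Xsb‖ ^ 2 ≤ M ^ 2 * (2 * T * C / (β * I)) := by
      have h3 : ‖Xb - Xsb‖ ^ 2 ≤ 2 * C * M ^ 2 / (β * I) := by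
        rw [le_div_iff₀ (by positivity : (0:ℝ) < β * I)]
        have h4 : β * ‖Xb - Xsb‖ ^ 2 * I ≤ (2 * C * M ^ 2 / I) * I := by
          nlinarith [hsumd, hIpos]
        rw [div_mul_cancel₀ _ (ne_of_gt hIpos)] at h4
        nlinarith [h4]
      have h5 : 2 * C * M ^ 2 / (β * I) ≤ M ^ 2 * (2 * T * C / (β * I)) := by
        rw [mul_div_assoc']
        have h6 : 2 * C * M ^ 2 ≤ M ^ 2 * (2 * T * C) := by
          nlinarith [mul_nonneg (mul_nonneg (sub_nonneg.mpr hT1) hC0) (sq_nonneg M)]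
        exact (div_le_div_iff_of_pos_right (by positivity)).mpr h6
      linarith
    calc ‖Xb - Xsb‖ = Real.sqrt (‖Xb - Xsb‖ ^ 2) := (Real.sqrt_sq (norm_nonneg _)).symm
      _ ≤ Real.sqrt (M ^ 2 * (2 * T * C / (β * I))) := Real.sqrt_le_sqrt hfin
      _ = M * Real.sqrt (2 * T * C / (β * I)) := by
          rw [Real.sqrt_mul (sq_nonneg M), Real.sqrt_sq hM0]
end
end

section
/- Let X_i, X_n ⊂ R^T be convex compact sets with Hausdorff distance d_H(X_i, X_n) ≤ δ, and suppose the affine hull of X_i is contained in the affine hull of X_n. If x ∈ X_n satisfies d(x, rbd X_n) > δ (distance to the relative boundary of X_n), then x ∈ X_i. -/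
noncomputable section

open Metric Set

/-- A preconnected set meeting both a set and its complement meets its frontier. -/
lemma preconnected_inter_frontier_nonempty' {X : Type*} [TopologicalSpace X] {C S : Set X}
    (hC : IsPreconnected C) (h1 : (C ∩ S).Nonempty) (h2 : (C \ S).Nonempty) :
    (C ∩ frontier S).Nonempty := by
  by_contra h
  rw [Set.not_nonempty_iff_eq_empty] at h
  have hdisj : ∀ c ∈ C, c ∉ frontier S := fun c hc hcf =>
    Set.eq_empty_iff_forall_notMem.mp h c ⟨hc, hcf⟩
  have hsub : C ⊆ interior S ∪ interior Sᶜ := by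
    intro c hc
    by_cases hcS : c ∈ closure S
    · left
      have : c ∈ closure S \ frontier S := ⟨hcS, hdisj c hc⟩
      rwa [closure_diff_frontier] at this
    · right
      rwa [interior_compl, Set.mem_compl_iff]
  obtain ⟨a, haC, haS⟩ := h1
  obtain ⟨b, hbC, hbS⟩ := h2
  have haI : a ∈ interior S := by
    have : a ∈ S \ frontier S := ⟨haS, hdisj a haC⟩
    rwa [self_diff_frontier] at this
  have hbI : b ∈ interior Sᶜ := by
    have : b ∈ Sᶜ \ frontier Sᶜ := ⟨hbS, by rw [frontier_compl]; exact hdisj b hbC⟩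
    rwa [self_diff_frontier] at this
  obtain ⟨e, _, heS, heS'⟩ :=
    hC (interior S) (interior Sᶜ) isOpen_interior isOpen_interior hsub
      ⟨a, haC, haI⟩ ⟨b, hbC, hbI⟩
  exact (interior_subset heS' : e ∈ Sᶜ) (interior_subset heS)

/-- If `d_H(X_i, X_n) ≤ δ`, `aff X_i ⊆ aff X_n`, and `x ∈ X_n` is at distance
more than `δ` from the relative boundary of `X_n`, then `x ∈ X_i`. -/
theorem mem_of_far_from_relative_boundary {T : ℕ}
    (Xi Xn : Set (EuclideanSpace ℝ (Fin T)))
    (hXi : Convex ℝ Xi) (hXicpt : IsCompact Xi) (hXine : Xi.Nonempty)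
    (hXn : Convex ℝ Xn) (hXncpt : IsCompact Xn) (hXnne : Xn.Nonempty)
    (δ : ℝ) (hd : Metric.hausdorffDist Xi Xn ≤ δ)
    (haff : affineSpan ℝ Xi ≤ affineSpan ℝ Xn)
    (x : EuclideanSpace ℝ (Fin T)) (hx : x ∈ Xn)
    (hfar : δ < Metric.infDist x (intrinsicFrontier ℝ Xn)) :
    x ∈ Xi := by
  by_contra hxi
  have hδ0 : 0 ≤ δ := le_trans Metric.hausdorffDist_nonneg hd
  -- projection of x onto Xi
  obtain ⟨p, hp, hdistp⟩ := hXicpt.exists_infDist_eq_dist hXine x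
  have hxp : x ≠ p := fun h => hxi (h ▸ hp)
  have hnorm : 0 < ‖x - p‖ := by
    rw [norm_pos_iff, sub_ne_zero]; exact hxp
  have hproj : ∀ y ∈ Xi, inner ℝ (x - p) (y - p) ≤ (0 : ℝ) := by
    rw [← norm_eq_iInf_iff_real_inner_le_zero hXi hp]
    have heq : Metric.infDist x Xi = ⨅ w : Xi, ‖x - (w : EuclideanSpace ℝ (Fin T))‖ := by
      rw [Metric.infDist_eq_iInf]
      simp_rw [dist_eq_norm]
    rw [← dist_eq_norm, ← hdistp, heq]
  set c : ℝ := δ / ‖x - p‖ with hc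
  have hc0 : 0 ≤ c := div_nonneg hδ0 hnorm.le
  set z : EuclideanSpace ℝ (Fin T) := c • (x - p) + x with hzdef
  -- membership in the affine span
  have hxspan : x ∈ affineSpan ℝ Xn := subset_affineSpan ℝ Xn hx
  have hpspan : p ∈ affineSpan ℝ Xn := haff (subset_affineSpan ℝ Xi hp)
  have hspan : ∀ t : ℝ, t • (x - p) + x ∈ affineSpan ℝ Xn := by
    intro t
    have := AffineSubspace.smul_vsub_vadd_mem (affineSpan ℝ Xn) t hxspan hpspan hxspan
    simpa [vsub_eq_sub, vadd_eq_add] using this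
  -- z ∈ Xn
  have hzXn : z ∈ Xn := by
    by_contra hz
    -- path in the subtype
    set g : ℝ → (affineSpan ℝ Xn : Set _) := fun t => ⟨(t * c) • (x - p) + x, hspan _⟩ with hg
    have hgc : Continuous g := by
      apply Continuous.subtype_mk
      continuity
    have hC : IsPreconnected (g '' Set.Icc (0:ℝ) 1) :=
      (isPreconnected_Icc).image g hgc.continuousOn
    have h1 : ((g '' Set.Icc (0:ℝ) 1) ∩ ((↑) ⁻¹' Xn : Set (affineSpan ℝ Xn))).Nonempty := by
      refine ⟨g 0, ⟨0, by simp, rfl⟩, ?_⟩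
      simp only [hg, zero_mul, zero_smul, zero_add, Set.mem_preimage]
      exact hx
    have h2 : ((g '' Set.Icc (0:ℝ) 1) \ ((↑) ⁻¹' Xn : Set (affineSpan ℝ Xn))).Nonempty := by
      refine ⟨g 1, ⟨1, by simp, rfl⟩, ?_⟩
      simp only [hg, one_mul, Set.mem_preimage]
      exact hz
    obtain ⟨w', hw'C, hw'f⟩ := preconnected_inter_frontier_nonempty' hC h1 h2
    obtain ⟨t, ht, hgt⟩ := hw'C
    have hwfront : (w' : EuclideanSpace ℝ (Fin T)) ∈ intrinsicFrontier ℝ Xn :=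
      ⟨w', hw'f, rfl⟩
    have hdistw : dist x (w' : EuclideanSpace ℝ (Fin T)) ≤ δ := by
      rw [← hgt]
      simp only [hg]
      rw [dist_eq_norm]
      have : x - ((t * c) • (x - p) + x) = -((t * c) • (x - p)) := by abel
      rw [this, norm_neg, norm_smul, Real.norm_eq_abs,
        abs_of_nonneg (mul_nonneg ht.1 hc0)]
      calc t * c * ‖x - p‖ ≤ 1 * c * ‖x - p‖ := by
              apply mul_le_mul_of_nonneg_right _ hnorm.le
              exact mul_le_mul_of_nonneg_right ht.2 hc0
        _ = δ := by
              rw [one_mul, hc, div_mul_cancel₀ _ hnorm.ne']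
    have : Metric.infDist x (intrinsicFrontier ℝ Xn) ≤ δ :=
      le_trans (Metric.infDist_le_dist_of_mem hwfront) hdistw
    linarith
  -- z is within δ of Xi
  have hfin : EMetric.hausdorffEdist Xn Xi ≠ ⊤ :=
    Metric.hausdorffEdist_ne_top_of_nonempty_of_bounded hXnne hXine
      hXncpt.isBounded hXicpt.isBounded
  have hzXi : Metric.infDist z Xi ≤ δ := by
    calc Metric.infDist z Xi ≤ Metric.hausdorffDist Xn Xi :=
          Metric.infDist_le_hausdorffDist_of_mem hzXn hfin
      _ = Metric.hausdorffDist Xi Xn := Metric.hausdorffDist_comm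
      _ ≤ δ := hd
  obtain ⟨y, hy, hdisty⟩ := hXicpt.exists_infDist_eq_dist hXine z
  have hdy : dist z y ≤ δ := by rw [← hdisty]; exact hzXi
  -- lower bound on dist z y via the projection inequality
  have hinner : inner ℝ (x - p) (y - p) ≤ (0 : ℝ) := hproj y hy
  have hzy : z - y = c • (x - p) + (x - p) + (p - y) := by
    rw [hzdef]; abel
  have hkey : δ * ‖x - p‖ < inner ℝ (z - y) (x - p) := by
    rw [hzy]
    rw [inner_add_left, inner_add_left, real_inner_smul_left,
      real_inner_self_eq_norm_sq]
    have h1 : c * ‖x - p‖ ^ 2 = δ * ‖x - p‖ := by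
      rw [hc, sq]
      field_simp
    have h2 : (0:ℝ) ≤ inner ℝ (p - y) (x - p) := by
      have : (p : EuclideanSpace ℝ (Fin T)) - y = -(y - p) := by abel
      rw [this, inner_neg_left, neg_nonneg, real_inner_comm]
      exact hinner
    nlinarith [sq_nonneg ‖x - p‖]
  have hCS : inner ℝ (z - y) (x - p) ≤ ‖z - y‖ * ‖x - p‖ := real_inner_le_norm _ _
  have : δ * ‖x - p‖ < ‖z - y‖ * ‖x - p‖ := lt_of_lt_of_le hkey hCS
  have hzylb : δ < ‖z - y‖ := lt_of_mul_lt_mul_right this hnorm.le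
  rw [dist_eq_norm] at hdy
  linarith
end
end
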